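/- Let k be a field of characteristic ≠ 2 and (V,Q) an n-dimensional quadratic space over k admitting a basis v₁, …, v_n with B(v_i, v_j) = 0 for i ≠ j and Q(v_i) ≠ 0 for all i. Set δ = ι(v₁)⋯ι(v_n) in the Clifford algebra C_V, and let C_V⁰ be the even Clifford algebra. If n is even (so that δ ∈ C_V⁰), the center of C_V⁰ equals k·1 + k·δ (the k-span of 1 and δ); if n is odd, the center of C_V⁰ equals k·1. -/

import Mathlib

namespace EvenCliffordCenter

variable {k : Type*} [Field k] {A : Type*} [Ring A] [Algebra k A]

/-- Move an element across a product, with per-factor commutation scalars. -/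
theorem move_lemma (f : ℕ → A) (c : ℕ → k) (x : A) :
    ∀ l : List ℕ, (∀ i ∈ l, x * f i = c i • (f i * x)) →
      x * (l.map f).prod = (l.map c).prod • ((l.map f).prod * x)
  | [], _ => by simp
  | (a :: l), h => by
    have ha := h a (List.mem_cons_self)
    have ih := move_lemma f c x l (fun i hi => h i (List.mem_cons_of_mem a hi))
    simp only [List.map_cons, List.prod_cons]
    calc x * (f a * (l.map f).prod) = (x * f a) * (l.map f).prod := by rw [mul_assoc]
      _ = (c a • (f a * x)) * (l.map f).prod := by rw [ha]
      _ = c a • (f a * (x * (l.map f).prod)) := by rw [smul_mul_assoc, mul_assoc]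
      _ = c a • (f a * ((l.map c).prod • ((l.map f).prod * x))) := by rw [ih]
      _ = (c a * (l.map c).prod) • (f a * (l.map f).prod * x) := by
          rw [mul_smul_comm, mul_smul, mul_assoc]

theorem sign_prod_sq (c : ℕ → k) : ∀ l : List ℕ, (∀ i ∈ l, c i = 1 ∨ c i = -1) →
      (l.map c).prod * (l.map c).prod = 1
  | [], _ => by simp
  | (a :: l), h => by
    have ih := sign_prod_sq c l (fun i hi => h i (List.mem_cons_of_mem a hi))
    have ha : c a * c a = 1 := by rcases h a (List.mem_cons_self) with h1 | h1 <;>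
      rw [h1] <;> ring
    simp only [List.map_cons, List.prod_cons]
    calc c a * (l.map c).prod * (c a * (l.map c).prod)
        = (c a * c a) * ((l.map c).prod * (l.map c).prod) := by ring
      _ = 1 := by rw [ha, ih, mul_one]

theorem neg_one_prod (c : ℕ → k) : ∀ l : List ℕ, (∀ i ∈ l, c i = -1) →
      (l.map c).prod = (-1) ^ l.length
  | [], _ => by simp
  | (a :: l), h => by
    have ih := neg_one_prod c l (fun i hi => h i (List.mem_cons_of_mem a hi))
    simp only [List.map_cons, List.prod_cons, List.length_cons, ih,
      h a (List.mem_cons_self), pow_succ]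
    ring




section defs
variable {k V : Type*} [Field k] [AddCommGroup V] [Module k V]
variable (Q : QuadraticForm k V) {n : ℕ} (b : Module.Basis (Fin n) k V)

open CliffordAlgebra

/-- The factor function: `ι (b p)` or `1` at position `p`. -/
noncomputable def ts (s : Fin n → Bool) (p : ℕ) : CliffordAlgebra Q :=
  if h : p < n then (if s ⟨p, h⟩ then ι Q (b ⟨p, h⟩) else 1) else 1

/-- Sign factor at position `p`. -/
def cs (s : Fin n → Bool) (p : ℕ) : k :=
  if h : p < n then (if s ⟨p, h⟩ then -1 else 1) else 1

/-- Segment product over positions `[m, m+c)`. -/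
noncomputable def Eseg (s : Fin n → Bool) (m c : ℕ) : CliffordAlgebra Q :=
  ((List.range' m c).map (ts Q b s)).prod

/-- Sign segment product. -/
def Wseg (s : Fin n → Bool) (m c : ℕ) : k :=
  ((List.range' m c).map (cs (k := k) s)).prod

noncomputable def E (s : Fin n → Bool) : CliffordAlgebra Q := Eseg Q b s 0 n

def W (s : Fin n → Bool) : k := Wseg (k := k) s 0 n

def flip (j : Fin n) (s : Fin n → Bool) : Fin n → Bool := Function.update s j (!s j)

theorem flip_flip (j : Fin n) (s : Fin n → Bool) : flip j (flip j s) = s := by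
  funext i
  rcases eq_or_ne i j with rfl | h
  · simp [flip]
  · simp [flip, Function.update_of_ne h]

theorem flip_apply_ne (j : Fin n) (s : Fin n → Bool) {i : Fin n} (h : i ≠ j) :
    flip j s i = s i := Function.update_of_ne h _ _

theorem flip_apply_self (j : Fin n) (s : Fin n → Bool) : flip j s j = !s j := by
  simp [flip]

theorem flip_comm {a b' : Fin n} (h : a ≠ b') (s : Fin n → Bool) :
    flip a (flip b' s) = flip b' (flip a s) := by
  funext i
  rcases eq_or_ne i a with rfl | ha
  · rw [flip_apply_self, flip_apply_ne _ _ h, flip_apply_ne _ _ h, flip_apply_self]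
  · rcases eq_or_ne i b' with rfl | hb
    · rw [flip_apply_ne _ _ ha, flip_apply_self, flip_apply_self, flip_apply_ne _ _ ha]
    · rw [flip_apply_ne _ _ ha, flip_apply_ne _ _ hb, flip_apply_ne _ _ hb, flip_apply_ne _ _ ha]

theorem Eseg_split (s : Fin n → Bool) (m c₁ c₂ : ℕ) :
    Eseg Q b s m (c₁ + c₂) = Eseg Q b s m c₁ * Eseg Q b s (m + c₁) c₂ := by
  rw [Eseg, Eseg, Eseg, ← List.prod_append, ← List.map_append, List.range'_append_1,
    Nat.add_comm c₁ c₂]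

theorem Wseg_split (s : Fin n → Bool) (m c₁ c₂ : ℕ) :
    Wseg (k := k) s m (c₁ + c₂) = Wseg (k := k) s m c₁ * Wseg (k := k) s (m + c₁) c₂ := by
  rw [Wseg, Wseg, Wseg, ← List.prod_append, ← List.map_append, List.range'_append_1,
    Nat.add_comm c₁ c₂]

theorem Eseg_one (s : Fin n → Bool) (m : ℕ) : Eseg Q b s m 1 = ts Q b s m := by
  simp [Eseg, List.range'_succ]

theorem Wseg_one (s : Fin n → Bool) (m : ℕ) : Wseg (k := k) s m 1 = cs (k := k) s m := by
  simp [Wseg, List.range'_succ]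

theorem Eseg_congr {s s' : Fin n → Bool} (m c : ℕ)
    (h : ∀ p, m ≤ p → p < m + c → ts Q b s p = ts Q b s' p) :
    Eseg Q b s m c = Eseg Q b s' m c := by
  rw [Eseg, Eseg]
  congr 1
  refine List.map_congr_left fun p hp => ?_
  rw [List.mem_range'_1] at hp
  exact h p hp.1 hp.2

theorem Wseg_congr {s s' : Fin n → Bool} (m c : ℕ)
    (h : ∀ p, m ≤ p → p < m + c → cs (k := k) s p = cs (k := k) s' p) :
    Wseg (k := k) s m c = Wseg (k := k) s' m c := by
  rw [Wseg, Wseg]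
  congr 1
  refine List.map_congr_left fun p hp => ?_
  rw [List.mem_range'_1] at hp
  exact h p hp.1 hp.2

theorem ts_flip_ne (j : Fin n) (s : Fin n → Bool) {p : ℕ} (h : p ≠ j.val) :
    ts Q b (flip j s) p = ts Q b s p := by
  unfold ts
  split
  · next hp => rw [flip_apply_ne _ _ (by simpa using Fin.val_ne_iff.mp (by simpa using h))]
  · rfl

theorem cs_flip_ne (j : Fin n) (s : Fin n → Bool) {p : ℕ} (h : p ≠ j.val) :
    cs (k := k) (flip j s) p = cs (k := k) s p := by
  unfold cs
  split
  · next hp => rw [flip_apply_ne _ _ (by simpa using Fin.val_ne_iff.mp (by simpa using h))]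
  · rfl

theorem cs_sign (s : Fin n → Bool) (p : ℕ) : cs (k := k) s p = 1 ∨ cs (k := k) s p = -1 := by
  unfold cs
  split
  · split
    · exact Or.inr rfl
    · exact Or.inl rfl
  · exact Or.inl rfl

theorem Wseg_sq (s : Fin n → Bool) (m c : ℕ) :
    Wseg (k := k) s m c * Wseg (k := k) s m c = 1 :=
  sign_prod_sq _ _ (fun p _ => cs_sign s p)

theorem Wseg_ne_zero (s : Fin n → Bool) (m c : ℕ) : Wseg (k := k) s m c ≠ 0 := by
  intro h
  have := Wseg_sq (k := k) s m c
  rw [h, zero_mul] at this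
  exact zero_ne_one this

end defs

section mult
variable {k V : Type*} [Field k] [AddCommGroup V] [Module k V]
variable (Q : QuadraticForm k V) {n : ℕ} (b : Module.Basis (Fin n) k V)
variable (horth : ∀ i j, i ≠ j → QuadraticMap.polar Q (b i) (b j) = 0)

open CliffordAlgebra

include horth in
theorem iota_anticomm {i j : Fin n} (h : i ≠ j) :
    ι Q (b j) * ι Q (b i) = (-1 : k) • (ι Q (b i) * ι Q (b j)) := by
  rw [ι_mul_ι_comm, horth j i (Ne.symm h), map_zero, zero_sub, neg_one_smul]

include horth in
theorem iota_ts_comm (j : Fin n) (s : Fin n → Bool) {p : ℕ} (hp : p ≠ j.val) :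
    ι Q (b j) * ts Q b s p = cs (k := k) s p • (ts Q b s p * ι Q (b j)) := by
  unfold ts cs
  split
  · next h =>
    by_cases hs : s ⟨p, h⟩
    · rw [if_pos hs, if_pos hs]
      exact iota_anticomm Q b horth (fun he => hp (by rw [← he]))
    · simp [hs]
  · simp

include horth in
theorem iota_Eseg_comm (j : Fin n) (s : Fin n → Bool) (m c : ℕ)
    (h : j.val < m ∨ m + c ≤ j.val) :
    ι Q (b j) * Eseg Q b s m c = Wseg (k := k) s m c • (Eseg Q b s m c * ι Q (b j)) := by
  refine move_lemma _ _ _ _ fun p hp => ?_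
  rw [List.mem_range'_1] at hp
  refine iota_ts_comm Q b horth j s ?_
  rcases h with h | h
  · omega
  · omega

include horth in
theorem Eseg_iota_comm (j : Fin n) (s : Fin n → Bool) (m c : ℕ)
    (h : j.val < m ∨ m + c ≤ j.val) :
    Eseg Q b s m c * ι Q (b j) = Wseg (k := k) s m c • (ι Q (b j) * Eseg Q b s m c) := by
  rw [iota_Eseg_comm Q b horth j s m c h, smul_smul, Wseg_sq, one_smul]

include horth in
theorem iota_ts_self (j : Fin n) (s : Fin n → Bool) :
    ι Q (b j) * ts Q b s j.val =
      (if s j then Q (b j) else 1) • ts Q b (flip j s) j.val := by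
  unfold ts
  rw [dif_pos j.isLt, dif_pos j.isLt]
  rw [flip_apply_self]
  by_cases hs : s j
  · rw [if_pos hs, if_pos hs, hs]
    simp only [Bool.not_true, if_neg Bool.false_ne_true]
    rw [ι_sq_scalar, Algebra.algebraMap_eq_smul_one]
  · rw [if_neg hs, if_neg hs]
    simp only [Bool.not_eq_true] at hs
    rw [hs]
    simp

include horth in
theorem ts_iota_self (j : Fin n) (s : Fin n → Bool) :
    ts Q b s j.val * ι Q (b j) =
      (if s j then Q (b j) else 1) • ts Q b (flip j s) j.val := by
  unfold ts
  rw [dif_pos j.isLt, dif_pos j.isLt]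
  rw [flip_apply_self]
  by_cases hs : s j
  · rw [if_pos hs, if_pos hs, hs]
    simp only [Bool.not_true, if_neg Bool.false_ne_true]
    rw [ι_sq_scalar, Algebra.algebraMap_eq_smul_one]
  · rw [if_neg hs, if_neg hs]
    simp only [Bool.not_eq_true] at hs
    rw [hs]
    simp

end mult
section Lone
variable {k V : Type*} [Field k] [AddCommGroup V] [Module k V]
variable (Q : QuadraticForm k V) {n : ℕ} (b : Module.Basis (Fin n) k V)
variable (horth : ∀ i j, i ≠ j → QuadraticMap.polar Q (b i) (b j) = 0)

open CliffordAlgebra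

omit horth in
theorem E_expand (j : Fin n) (t : Fin n → Bool) :
    E Q b t = Eseg Q b t 0 j.val *
      (ts Q b t j.val * Eseg Q b t (j.val + 1) (n - j.val - 1)) := by
  have hn : n = j.val + (1 + (n - j.val - 1)) := by omega
  rw [E, show Eseg Q b t 0 n = Eseg Q b t 0 (j.val + (1 + (n - j.val - 1))) from
    congrArg _ hn]
  rw [Eseg_split, Eseg_split, Eseg_one, Nat.zero_add]

omit horth in
theorem W_expand (j : Fin n) (t : Fin n → Bool) :
    W (k := k) t = Wseg (k := k) t 0 j.val *
      (cs (k := k) t j.val * Wseg (k := k) t (j.val + 1) (n - j.val - 1)) := by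
  have hn : n = j.val + (1 + (n - j.val - 1)) := by omega
  rw [W, show Wseg (k := k) t 0 n = Wseg (k := k) t 0 (j.val + (1 + (n - j.val - 1))) from
    congrArg _ hn]
  rw [Wseg_split, Wseg_split, Wseg_one, Nat.zero_add]

omit horth in
theorem Eseg_flip_lt (j : Fin n) (s : Fin n → Bool) :
    Eseg Q b (flip j s) 0 j.val = Eseg Q b s 0 j.val :=
  Eseg_congr Q b _ _ fun p _ hp => ts_flip_ne Q b j s (by omega)

omit horth in
theorem Eseg_flip_gt (j : Fin n) (s : Fin n → Bool) :
    Eseg Q b (flip j s) (j.val + 1) (n - j.val - 1) =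
      Eseg Q b s (j.val + 1) (n - j.val - 1) :=
  Eseg_congr Q b _ _ fun p hp _ => ts_flip_ne Q b j s (by omega)

include horth in
theorem L1 (j : Fin n) (s : Fin n → Bool) :
    ι Q (b j) * E Q b s =
      (Wseg (k := k) s 0 j.val * (if s j then Q (b j) else 1)) • E Q b (flip j s) := by
  rw [E_expand Q b j s, E_expand Q b j (flip j s)]
  rw [← mul_assoc, ← mul_assoc, iota_Eseg_comm Q b horth j s 0 j.val (Or.inr (by omega))]
  rw [smul_mul_assoc, smul_mul_assoc, mul_assoc _ _ (ts Q b s j.val),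
    iota_ts_self Q b horth j s, Eseg_flip_lt Q b j s, Eseg_flip_gt Q b j s]
  simp only [smul_mul_assoc, mul_smul_comm, smul_smul, mul_assoc]

include horth in
theorem L1' (j : Fin n) (s : Fin n → Bool) :
    E Q b s * ι Q (b j) =
      (Wseg (k := k) s (j.val + 1) (n - j.val - 1) * (if s j then Q (b j) else 1)) •
        E Q b (flip j s) := by
  rw [E_expand Q b j s, E_expand Q b j (flip j s)]
  rw [mul_assoc, mul_assoc, Eseg_iota_comm Q b horth j s (j.val + 1) (n - j.val - 1)
    (Or.inl (by omega))]
  rw [mul_smul_comm, mul_smul_comm, ← mul_assoc (ts Q b s j.val),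
    ts_iota_self Q b horth j s, Eseg_flip_lt Q b j s, Eseg_flip_gt Q b j s]
  simp only [smul_mul_assoc, mul_smul_comm, smul_smul, mul_assoc]

omit horth in
theorem W_flip (j : Fin n) (s : Fin n → Bool) :
    W (k := k) (flip j s) = - W (k := k) s := by
  rw [W_expand (k := k) j s, W_expand (k := k) j (flip j s)]
  have h1 : Wseg (k := k) (flip j s) 0 j.val = Wseg (k := k) s 0 j.val :=
    Wseg_congr _ _ fun p _ hp => cs_flip_ne j s (by omega)
  have h2 : Wseg (k := k) (flip j s) (j.val + 1) (n - j.val - 1) =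
      Wseg (k := k) s (j.val + 1) (n - j.val - 1) :=
    Wseg_congr _ _ fun p hp _ => cs_flip_ne j s (by omega)
  have h3 : cs (k := k) (flip j s) j.val = - cs (k := k) s j.val := by
    unfold cs
    rw [dif_pos j.isLt, dif_pos j.isLt]
    have : (⟨j.val, j.isLt⟩ : Fin n) = j := rfl
    rw [this, flip_apply_self]
    by_cases hs : s j
    · rw [hs]; simp
    · simp only [Bool.not_eq_true] at hs; rw [hs]; simp
  rw [h1, h2, h3]
  ring

end Lone
theorem smul_factors_prod {k : Type*} [Field k] {A : Type*} [Ring A] [Algebra k A]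
    (f : ℕ → A) (c : ℕ → k) : ∀ l : List ℕ,
      (l.map fun p => c p • f p).prod = (l.map c).prod • (l.map f).prod
  | [] => by simp
  | a :: l => by
    simp only [List.map_cons, List.prod_cons, smul_factors_prod f c l]
    rw [smul_mul_assoc, mul_smul_comm, smul_smul]

section basics
variable {k V : Type*} [Field k] [AddCommGroup V] [Module k V]
variable (Q : QuadraticForm k V) {n : ℕ} (b : Module.Basis (Fin n) k V)
variable (horth : ∀ i j, i ≠ j → QuadraticMap.polar Q (b i) (b j) = 0)
variable (hQ : ∀ i, Q (b i) ≠ 0) (hchar : (2 : k) ≠ 0)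

open CliffordAlgebra

omit horth hQ hchar in
theorem E_bot : E Q b (fun _ => false) = 1 := by
  apply List.prod_eq_one
  intro x hx
  simp only [List.mem_map] at hx
  obtain ⟨p, _, rfl⟩ := hx
  unfold ts
  split <;> simp

omit horth hQ hchar in
theorem E_top : E Q b (fun _ => true) = (List.ofFn fun i => ι Q (b i)).prod := by
  rw [E, Eseg]
  congr 1
  apply List.ext_getElem
  · simp
  · intro i h1 h2
    simp only [List.getElem_map, List.getElem_range'_1, List.getElem_ofFn]
    have hi : i < n := by simpa using h2
    unfold ts
    rw [dif_pos (by omega : 0 + i < n)]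
    simp

omit horth hQ hchar in
theorem W_bot : W (k := k) (fun _ : Fin n => false) = 1 := by
  unfold W Wseg
  apply List.prod_eq_one
  intro x hx
  simp only [List.mem_map] at hx
  obtain ⟨p, _, rfl⟩ := hx
  unfold cs
  split <;> simp

omit horth hQ hchar in
theorem W_top : W (k := k) (fun _ : Fin n => true) = (-1) ^ n := by
  unfold W Wseg
  rw [show ((-1 : k)) ^ n = (-1 : k) ^ (List.range' 0 n).length by simp]
  apply neg_one_prod
  intro p hp
  rw [List.mem_range'_1] at hp
  unfold cs
  rw [dif_pos (by omega : p < n)]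
  simp

omit horth hQ hchar in
theorem involute_ts (s : Fin n → Bool) (p : ℕ) :
    involute (ts Q b s p) = cs (k := k) s p • ts Q b s p := by
  unfold ts cs
  split
  · split
    · rw [involute_ι, neg_one_smul]
    · rw [map_one, one_smul]
  · rw [map_one, one_smul]

omit horth hQ hchar in
theorem involute_E (s : Fin n → Bool) :
    involute (E Q b s) = W (k := k) s • E Q b s := by
  rw [E, Eseg, W, map_list_prod, List.map_map]
  unfold Wseg
  rw [show (List.range' 0 n).map (⇑involute ∘ ts Q b s) =
    (List.range' 0 n).map (fun p => cs (k := k) s p • ts Q b s p) from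
    List.map_congr_left fun p _ => involute_ts Q b s p]
  exact smul_factors_prod _ _ _

omit horth hQ hchar in
theorem cs_sq (s : Fin n → Bool) (p : ℕ) : cs (k := k) s p * cs (k := k) s p = 1 := by
  rcases cs_sign (k := k) s p with h | h <;> rw [h] <;> ring

omit horth hQ hchar in
theorem Wseg_outer (j : Fin n) (s : Fin n → Bool) :
    Wseg (k := k) s 0 j.val * Wseg (k := k) s (j.val + 1) (n - j.val - 1) =
      W (k := k) s * cs (k := k) s j.val := by
  rw [W_expand (k := k) j s]
  calc Wseg (k := k) s 0 j.val * Wseg (k := k) s (j.val + 1) (n - j.val - 1)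
      = Wseg (k := k) s 0 j.val * (cs (k := k) s j.val *
          Wseg (k := k) s (j.val + 1) (n - j.val - 1)) * cs (k := k) s j.val := by
        rw [show ∀ a c w : k, a * (c * w) * c = (a * w) * (c * c) from fun a c w => by ring,
          cs_sq, mul_one]
    _ = _ := rfl

include horth in
omit hQ hchar in
theorem conj_eigen (j : Fin n) (s : Fin n → Bool) :
    ι Q (b j) * E Q b s * ι Q (b j) =
      (W (k := k) s * cs (k := k) s j.val * Q (b j)) • E Q b s := by
  rw [L1 Q b horth j s, smul_mul_assoc, L1' Q b horth j (flip j s), flip_flip]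
  have hW : Wseg (k := k) (flip j s) (j.val + 1) (n - j.val - 1) =
      Wseg (k := k) s (j.val + 1) (n - j.val - 1) :=
    Wseg_congr _ _ fun p hp _ => cs_flip_ne j s (by omega)
  rw [hW, smul_smul, flip_apply_self]
  congr 1
  by_cases hs : s j
  · rw [hs]
    simp only [if_pos, Bool.not_true, if_neg Bool.false_ne_true, mul_one]
    rw [← Wseg_outer (k := k) j s]
    ring
  · simp only [Bool.not_eq_true] at hs
    rw [hs]
    simp only [Bool.not_false, if_neg Bool.false_ne_true, if_pos, mul_one]
    rw [← Wseg_outer (k := k) j s]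
    ring

end basics
section indep
variable {k V : Type*} [Field k] [AddCommGroup V] [Module k V]
variable (Q : QuadraticForm k V) {n : ℕ} (b : Module.Basis (Fin n) k V)
variable (horth : ∀ i j, i ≠ j → QuadraticMap.polar Q (b i) (b j) = 0)
variable (hQ : ∀ i, Q (b i) ≠ 0) (hchar : (2 : k) ≠ 0)

open CliffordAlgebra

def wt (s : Fin n → Bool) : ℕ := (Finset.univ.filter fun i => s i = true).card

omit horth hQ hchar in
theorem wt_flip_lt {s : Fin n → Bool} {j : Fin n} (h : s j = true) :
    wt (flip j s) < wt s := by
  have hfil : (Finset.univ.filter fun i => flip j s i = true) =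
      (Finset.univ.filter fun i => s i = true).erase j := by
    ext i
    simp only [Finset.mem_filter, Finset.mem_erase, Finset.mem_univ, true_and]
    rcases eq_or_ne i j with rfl | hij
    · simp [flip_apply_self, h]
    · simp [flip_apply_ne _ _ hij, hij]
  rw [wt, wt, hfil]
  exact Finset.card_erase_lt_of_mem (by simp [h])

omit horth hQ hchar in
theorem cs_val (s : Fin n → Bool) (j : Fin n) :
    cs (k := k) s j.val = if s j then -1 else 1 := by
  unfold cs
  rw [dif_pos j.isLt]

include horth hQ hchar in
theorem E_ne_zero : ∀ s : Fin n → Bool, E Q b s ≠ 0 := by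
  haveI : Invertible (2 : k) := invertibleOfNonzero hchar
  suffices H : ∀ N (s : Fin n → Bool), wt s ≤ N → E Q b s ≠ 0 from
    fun s => H (wt s) s le_rfl
  intro N
  induction N with
  | zero =>
    intro s hs
    have hbot : s = fun _ => false := by
      funext i
      by_contra hi
      simp only [Bool.not_eq_false] at hi
      have hcard : (Finset.univ.filter fun i' => s i' = true).card ≠ 0 := by
        simp only [ne_eq, Finset.card_eq_zero, Finset.filter_eq_empty_iff]
        push_neg
        exact ⟨i, Finset.mem_univ i, hi⟩
      rw [wt] at hs
      omega
    rw [hbot, E_bot]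
    exact one_ne_zero
  | succ N ih =>
    intro s hs
    by_cases hex : ∃ j, s j = true
    · obtain ⟨j, hj⟩ := hex
      intro hE
      have hL := L1' Q b horth j s
      rw [hE, zero_mul] at hL
      have hscal : Wseg (k := k) s (j.val + 1) (n - j.val - 1) *
          (if s j then Q (b j) else 1) ≠ 0 := by
        apply mul_ne_zero (Wseg_ne_zero s _ _)
        rw [if_pos hj]
        exact hQ j
      have : E Q b (flip j s) = 0 := by
        rcases smul_eq_zero.mp hL.symm with h | h
        · exact absurd h hscal
        · exact h
      exact ih (flip j s) (by have := wt_flip_lt (s := s) hj; omega) this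
    · push_neg at hex
      have hbot : s = fun _ => false := by
        funext i
        simpa using hex i
      rw [hbot, E_bot]
      exact one_ne_zero

include horth hQ hchar in
theorem separation (t t' : Fin n → Bool) (hne : t ≠ t') :
    ∃ (φ : CliffordAlgebra Q →ₗ[k] CliffordAlgebra Q) (μ : (Fin n → Bool) → k),
      (∀ s, φ (E Q b s) = μ s • E Q b s) ∧ μ t' = 0 ∧ μ t ≠ 0 := by
  by_cases hW : W (k := k) t = W (k := k) t'
  · have hj : ∃ j, t j ≠ t' j := by
      by_contra h
      push_neg at h
      exact hne (funext h)
    obtain ⟨j, hj⟩ := hj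
    set lam : (Fin n → Bool) → k := fun s => W (k := k) s * cs (k := k) s j.val * Q (b j)
      with hlam
    refine ⟨LinearMap.mulLeft k (ι Q (b j)) ∘ₗ LinearMap.mulRight k (ι Q (b j)) -
      lam t' • LinearMap.id, fun s => lam s - lam t', fun s => ?_, by simp, ?_⟩
    · simp only [LinearMap.sub_apply, LinearMap.comp_apply, LinearMap.mulRight_apply,
        LinearMap.mulLeft_apply, LinearMap.smul_apply, LinearMap.id_apply]
      rw [← mul_assoc, conj_eigen Q b horth j s, sub_smul]
    · simp only [ne_eq, sub_eq_zero, hlam]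
      rw [hW]
      intro hcontra
      have hWne : W (k := k) t' ≠ 0 := Wseg_ne_zero _ _ _
      have h1 := mul_right_cancel₀ (hQ j) hcontra
      have h2 := mul_left_cancel₀ hWne h1
      rw [cs_val, cs_val] at h2
      by_cases ht1 : t j = true
      · have ht2 : t' j = false := by revert hj; rw [ht1]; cases t' j <;> simp
        rw [ht1, ht2] at h2
        simp only [reduceIte, Bool.false_eq_true, if_false] at h2
        exact hchar (by linear_combination -h2)
      · have ht1' : t j = false := by revert ht1; cases t j <;> simp
        have ht2 : t' j = true := by revert hj; rw [ht1']; cases t' j <;> simp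
        rw [ht1', ht2] at h2
        simp only [reduceIte, Bool.false_eq_true, if_false] at h2
        exact hchar (by linear_combination h2)
  · refine ⟨involute.toLinearMap - W (k := k) t' • LinearMap.id,
      fun s => W (k := k) s - W (k := k) t', fun s => ?_, by simp, sub_ne_zero.mpr hW⟩
    simp only [LinearMap.sub_apply, AlgHom.toLinearMap_apply, LinearMap.smul_apply,
      LinearMap.id_apply]
    rw [involute_E, sub_smul]

end indep
section indep2
variable {k V : Type*} [Field k] [AddCommGroup V] [Module k V]
variable (Q : QuadraticForm k V) {n : ℕ} (b : Module.Basis (Fin n) k V)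
variable (horth : ∀ i j, i ≠ j → QuadraticMap.polar Q (b i) (b j) = 0)
variable (hQ : ∀ i, Q (b i) ≠ 0) (hchar : (2 : k) ≠ 0)

open CliffordAlgebra

include horth hQ hchar in
theorem indep_aux (F : Finset (Fin n → Bool)) :
    ∀ (c : (Fin n → Bool) → k), (∑ s ∈ F, c s • E Q b s) = 0 → ∀ t ∈ F, c t = 0 := by
  induction F using Finset.strongInduction with
  | _ F ih =>
    intro c hsum t ht
    by_cases hone : ∃ t' ∈ F, t' ≠ t
    · obtain ⟨t', ht', hne⟩ := hone
      obtain ⟨φ, μ, hφ, hμ0, hμt⟩ := separation Q b horth hQ hchar t t' (Ne.symm hne)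
      have h2 : ∑ s ∈ F, (μ s * c s) • E Q b s = 0 := by
        have := congrArg φ hsum
        rw [map_sum, map_zero] at this
        rw [← this]
        refine Finset.sum_congr rfl fun s _ => ?_
        rw [map_smul, hφ s, smul_smul, mul_comm (c s) (μ s)]
      have h3 : ∑ s ∈ F.erase t', (μ s * c s) • E Q b s = 0 := by
        rw [Finset.sum_erase _ (by rw [hμ0, zero_mul, zero_smul])]
        exact h2
      have h4 := ih (F.erase t') (Finset.erase_ssubset ht') _ h3 t
        (Finset.mem_erase.mpr ⟨Ne.symm hne, ht⟩)
      rcases mul_eq_zero.mp h4 with h | h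
      · exact absurd h hμt
      · exact h
    · push_neg at hone
      have : ∑ s ∈ F, c s • E Q b s = c t • E Q b t :=
        Finset.sum_eq_single_of_mem t ht fun s hs hst => absurd (hone s hs) (by simp [hst])
      rw [this] at hsum
      rcases smul_eq_zero.mp hsum with h | h
      · exact h
      · exact absurd h (E_ne_zero Q b horth hQ hchar t)

include horth hQ hchar in
theorem indep (c : (Fin n → Bool) → k)
    (hsum : ∑ s : Fin n → Bool, c s • E Q b s = 0) (t : Fin n → Bool) : c t = 0 :=
  indep_aux Q b horth hQ hchar Finset.univ c hsum t (Finset.mem_univ t)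

end indep2
section span
variable {k V : Type*} [Field k] [AddCommGroup V] [Module k V]
variable (Q : QuadraticForm k V) {n : ℕ} (b : Module.Basis (Fin n) k V)
variable (horth : ∀ i j, i ≠ j → QuadraticMap.polar Q (b i) (b j) = 0)

open CliffordAlgebra

include horth in
theorem span_step (m : V) (c : (Fin n → Bool) → k) :
    ∃ c' : (Fin n → Bool) → k,
      (∀ u, c' u ≠ 0 → ∃ j : Fin n, c (flip j u) ≠ 0) ∧
      ι Q m * (∑ s : Fin n → Bool, c s • E Q b s) = ∑ u : Fin n → Bool, c' u • E Q b u := by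
  refine ⟨fun u => ∑ j, b.repr m j * (c (flip j u) *
    (Wseg (k := k) (flip j u) 0 j.val * (if flip j u j then Q (b j) else 1))), ?_, ?_⟩
  · intro u hu
    by_contra hall
    push_neg at hall
    exact hu (Finset.sum_eq_zero fun j _ => by rw [hall j, zero_mul, mul_zero])
  · have hm : ι Q m = ∑ j, b.repr m j • ι Q (b j) := by
      calc ι Q m = ι Q (∑ j, b.repr m j • b j) := by rw [b.sum_repr]
        _ = ∑ j, b.repr m j • ι Q (b j) := by
            rw [map_sum]
            exact Finset.sum_congr rfl fun j _ => map_smul _ _ _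
    rw [hm, Finset.sum_mul]
    have step1 : ∀ j : Fin n,
        (b.repr m j • ι Q (b j)) * (∑ s : Fin n → Bool, c s • E Q b s) =
        ∑ u : Fin n → Bool, (b.repr m j * (c (flip j u) *
          (Wseg (k := k) (flip j u) 0 j.val * (if flip j u j then Q (b j) else 1)))) •
            E Q b u := by
      intro j
      have hbij : Function.Bijective (flip (n := n) j) :=
        Function.Involutive.bijective (flip_flip j)
      calc (b.repr m j • ι Q (b j)) * ∑ s : Fin n → Bool, c s • E Q b s
          = ∑ s : Fin n → Bool, (b.repr m j • ι Q (b j)) * (c s • E Q b s) :=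
            Finset.mul_sum _ _ _
        _ = ∑ u : Fin n → Bool,
            (b.repr m j • ι Q (b j)) * (c (flip j u) • E Q b (flip j u)) :=
            (Fintype.sum_bijective (flip j) hbij _ _ fun u => rfl).symm
        _ = _ := by
            refine Finset.sum_congr rfl fun u _ => ?_
            rw [smul_mul_assoc, mul_smul_comm, L1 Q b horth j (flip j u), flip_flip,
              smul_smul, smul_smul, mul_assoc]
    rw [Finset.sum_congr rfl fun j _ => step1 j, Finset.sum_comm]
    exact Finset.sum_congr rfl fun u _ => (Finset.sum_smul).symm

include horth in
theorem span_even (x : CliffordAlgebra Q) (hx : x ∈ CliffordAlgebra.evenOdd Q 0) :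
    ∃ c : (Fin n → Bool) → k, (∀ s, c s ≠ 0 → W (k := k) s = 1) ∧
      x = ∑ s : Fin n → Bool, c s • E Q b s := by
  induction x, hx using CliffordAlgebra.even_induction with
  | algebraMap r =>
    refine ⟨fun s => if s = (fun _ => false) then r else 0, fun s hs => ?_, ?_⟩
    · have : s = fun _ => false := by
        by_contra h
        exact hs (by simp [h])
      rw [this, W_bot]
    · rw [show ∑ s : Fin n → Bool, (if s = (fun _ => false) then r else 0) • E Q b s =
        ∑ s : Fin n → Bool, (if s = (fun _ => false) then r • E Q b s else 0) from
        Finset.sum_congr rfl fun s _ => by split <;> simp]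
      rw [Finset.sum_ite_eq' Finset.univ (fun _ => false) (fun s => r • E Q b s),
        if_pos (Finset.mem_univ _), E_bot, Algebra.algebraMap_eq_smul_one]
  | add x y hx hy ihx ihy =>
    obtain ⟨cx, hcx, rfl⟩ := ihx
    obtain ⟨cy, hcy, rfl⟩ := ihy
    refine ⟨fun s => cx s + cy s, fun s hs => ?_, ?_⟩
    · by_cases h : cx s = 0
      · refine hcy s fun h2 => hs ?_
        simp [h, h2]
      · exact hcx s h
    · rw [← Finset.sum_add_distrib]
      exact Finset.sum_congr rfl fun s _ => (add_smul _ _ _).symm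
  | ι_mul_ι_mul m₁ m₂ x hx ihx =>
    obtain ⟨c, hsupp, rfl⟩ := ihx
    obtain ⟨c₁, hs1, he1⟩ := span_step Q b horth m₂ c
    obtain ⟨c₂, hs2, he2⟩ := span_step Q b horth m₁ c₁
    refine ⟨c₂, ?_, ?_⟩
    · intro u hu
      obtain ⟨j, hj⟩ := hs2 u hu
      obtain ⟨j', hj'⟩ := hs1 _ hj
      have h1 := hsupp _ hj'
      rw [W_flip, W_flip, neg_neg] at h1
      exact h1
    · rw [mul_assoc, he1, he2]

end span
section kill
variable {k V : Type*} [Field k] [AddCommGroup V] [Module k V]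
variable (Q : QuadraticForm k V) {n : ℕ} (b : Module.Basis (Fin n) k V)
variable (horth : ∀ i j, i ≠ j → QuadraticMap.polar Q (b i) (b j) = 0)
variable (hQ : ∀ i, Q (b i) ≠ 0) (hchar : (2 : k) ≠ 0)

open CliffordAlgebra

omit hQ hchar in
include horth in
theorem right_mul_pair (a b' : Fin n) (hab : a < b') (s : Fin n → Bool) :
    E Q b s * (ι Q (b a) * ι Q (b b')) =
      ((Wseg (k := k) s (a.val + 1) (n - a.val - 1) *
        Wseg (k := k) s (b'.val + 1) (n - b'.val - 1)) *
        ((if s a then Q (b a) else 1) * (if s b' then Q (b b') else 1))) •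
        E Q b (flip b' (flip a s)) := by
  rw [← mul_assoc, L1' Q b horth a s, smul_mul_assoc, L1' Q b horth b' (flip a s), smul_smul]
  have h1 : Wseg (k := k) (flip a s) (b'.val + 1) (n - b'.val - 1) =
      Wseg (k := k) s (b'.val + 1) (n - b'.val - 1) :=
    Wseg_congr _ _ fun p hp _ => cs_flip_ne a s (by omega)
  have h2 : flip a s b' = s b' := flip_apply_ne a s (by omega : b' ≠ a)
  rw [h1, h2]
  ring_nf

omit hQ hchar in
include horth in
theorem left_mul_pair (a b' : Fin n) (hab : a < b') (s : Fin n → Bool) :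
    (ι Q (b a) * ι Q (b b')) * E Q b s =
      ((Wseg (k := k) s 0 a.val * Wseg (k := k) s 0 b'.val) *
        ((if s a then Q (b a) else 1) * (if s b' then Q (b b') else 1))) •
        E Q b (flip b' (flip a s)) := by
  rw [mul_assoc, L1 Q b horth b' s, mul_smul_comm, L1 Q b horth a (flip b' s), smul_smul]
  have h1 : Wseg (k := k) (flip b' s) 0 a.val = Wseg (k := k) s 0 a.val :=
    Wseg_congr _ _ fun p _ hp => cs_flip_ne b' s (by omega)
  have h2 : flip b' s a = s a := flip_apply_ne b' s (by omega : a ≠ b')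
  rw [h1, h2, flip_comm (by omega : a ≠ b')]
  ring_nf

omit hQ hchar in
theorem cs_mul_neg_one {s : Fin n → Bool} {a b' : Fin n} (hsab : s a ≠ s b') :
    cs (k := k) s a.val * cs (k := k) s b'.val = -1 := by
  rw [cs_val, cs_val]
  by_cases h1 : s a = true
  · have h2 : s b' = false := by revert hsab; rw [h1]; cases s b' <;> simp
    rw [h1, h2]
    norm_num
  · have h1' : s a = false := by revert h1; cases s a <;> simp
    have h2 : s b' = true := by revert hsab; rw [h1']; cases s b' <;> simp
    rw [h1', h2]
    norm_num

omit hQ hchar in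
theorem wseg_suffix_eq (j : Fin n) (s : Fin n → Bool) :
    Wseg (k := k) s (j.val + 1) (n - j.val - 1) =
      Wseg (k := k) s 0 j.val * (W (k := k) s * cs (k := k) s j.val) := by
  have h := Wseg_outer (k := k) j s
  have := congrArg (fun z => Wseg (k := k) s 0 j.val * z) h
  simpa [← mul_assoc, Wseg_sq, one_mul] using this

omit hQ hchar in
theorem tau_sign (a b' : Fin n) (s : Fin n → Bool) (hWs : W (k := k) s = 1)
    (hsab : s a ≠ s b') :
    Wseg (k := k) s (a.val + 1) (n - a.val - 1) *
      Wseg (k := k) s (b'.val + 1) (n - b'.val - 1) =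
      -(Wseg (k := k) s 0 a.val * Wseg (k := k) s 0 b'.val) := by
  rw [wseg_suffix_eq (k := k) a s, wseg_suffix_eq (k := k) b' s, hWs]
  have := cs_mul_neg_one (k := k) hsab
  calc Wseg (k := k) s 0 a.val * (1 * cs (k := k) s a.val) *
      (Wseg (k := k) s 0 b'.val * (1 * cs (k := k) s b'.val))
      = (Wseg (k := k) s 0 a.val * Wseg (k := k) s 0 b'.val) *
        (cs (k := k) s a.val * cs (k := k) s b'.val) := by ring
    _ = _ := by rw [this]; ring

include horth hQ hchar in
theorem central_coef (c : (Fin n → Bool) → k)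
    (hcen : ∀ y ∈ CliffordAlgebra.even Q,
      (∑ s : Fin n → Bool, c s • E Q b s) * y = y * (∑ s : Fin n → Bool, c s • E Q b s))
    (a b' : Fin n) (hab : a < b') :
    ∀ s : Fin n → Bool, W (k := k) s = 1 → s a ≠ s b' → c s = 0 := by
  intro s₀ hW0 hs0
  set y : CliffordAlgebra Q := ι Q (b a) * ι Q (b b') with hy
  have hymem : y ∈ CliffordAlgebra.even Q := ι_mul_ι_mem_evenOdd_zero Q (b a) (b b')
  have hcomm := hcen y hymem
  set g : (Fin n → Bool) → (Fin n → Bool) := fun s => flip b' (flip a s) with hg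
  have hginv : ∀ s, g (g s) = s := by
    intro s
    show flip b' (flip a (flip b' (flip a s))) = s
    rw [← flip_comm (by omega : a ≠ b') (flip b' (flip a s)), flip_flip, flip_flip]
  set d : (Fin n → Bool) → k := fun s =>
    c s * ((Wseg (k := k) s (a.val + 1) (n - a.val - 1) *
        Wseg (k := k) s (b'.val + 1) (n - b'.val - 1)) -
      (Wseg (k := k) s 0 a.val * Wseg (k := k) s 0 b'.val)) *
      ((if s a then Q (b a) else 1) * (if s b' then Q (b b') else 1)) with hd
  have hzero : ∑ s : Fin n → Bool, d s • E Q b (g s) = 0 := by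
    have e1 : (∑ s : Fin n → Bool, c s • E Q b s) * y =
        ∑ s : Fin n → Bool, (c s * ((Wseg (k := k) s (a.val + 1) (n - a.val - 1) *
          Wseg (k := k) s (b'.val + 1) (n - b'.val - 1)) *
          ((if s a then Q (b a) else 1) * (if s b' then Q (b b') else 1)))) •
          E Q b (g s) := by
      rw [Finset.sum_mul]
      exact Finset.sum_congr rfl fun s _ => by
        rw [smul_mul_assoc, right_mul_pair Q b horth a b' hab s, smul_smul]
    have e2 : y * (∑ s : Fin n → Bool, c s • E Q b s) =
        ∑ s : Fin n → Bool, (c s * ((Wseg (k := k) s 0 a.val * Wseg (k := k) s 0 b'.val) *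
          ((if s a then Q (b a) else 1) * (if s b' then Q (b b') else 1)))) •
          E Q b (g s) := by
      rw [Finset.mul_sum]
      exact Finset.sum_congr rfl fun s _ => by
        rw [mul_smul_comm, left_mul_pair Q b horth a b' hab s, smul_smul]
    have := sub_eq_zero.mpr hcomm
    rw [e1, e2, ← Finset.sum_sub_distrib] at this
    rw [← this]
    exact Finset.sum_congr rfl fun s _ => by rw [← sub_smul]; congr 1; simp only [hd]; ring
  have hzero' : ∑ u : Fin n → Bool, d (g u) • E Q b u = 0 := by
    have hbij : Function.Bijective g := Function.Involutive.bijective hginv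
    have := Fintype.sum_bijective g hbij (fun u => d (g u) • E Q b u)
      (fun s => d s • E Q b (g s)) (fun x => by simp only [hginv])
    exact this.trans hzero
  have hall := indep Q b horth hQ hchar (fun u => d (g u)) hzero' (g s₀)
  rw [hginv] at hall
  have htau := tau_sign (k := k) a b' s₀ hW0 hs0
  rw [hd] at hall
  simp only at hall
  rw [htau] at hall
  have hq : ((if s₀ a then Q (b a) else 1) * (if s₀ b' then Q (b b') else 1)) ≠ 0 := by
    apply mul_ne_zero <;> split <;> first | exact hQ _ | exact one_ne_zero
  have hW2 : (Wseg (k := k) s₀ 0 a.val * Wseg (k := k) s₀ 0 b'.val) ≠ 0 :=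
    mul_ne_zero (Wseg_ne_zero _ _ _) (Wseg_ne_zero _ _ _)
  rcases mul_eq_zero.mp hall with h | h
  · rcases mul_eq_zero.mp h with h' | h'
    · exact h'
    · exfalso
      apply hW2
      have : (-(2 : k)) * (Wseg (k := k) s₀ 0 a.val * Wseg (k := k) s₀ 0 b'.val) = 0 := by
        rw [← h']; ring
      rcases mul_eq_zero.mp this with h'' | h''
      · exact absurd (by linear_combination -h'' : (2 : k) = 0) hchar
      · exact h''
  · exact absurd h hq

end kill
section delta
variable {k V : Type*} [Field k] [AddCommGroup V] [Module k V]
variable (Q : QuadraticForm k V) {n : ℕ} (b : Module.Basis (Fin n) k V)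
variable (horth : ∀ i j, i ≠ j → QuadraticMap.polar Q (b i) (b j) = 0)

open CliffordAlgebra

omit horth in
theorem wseg_top_pow (m c : ℕ) (hc : m + c ≤ n) :
    Wseg (k := k) (fun _ : Fin n => true) m c = (-1) ^ c := by
  rw [Wseg, show ((-1 : k)) ^ c = (-1 : k) ^ (List.range' m c).length by simp]
  apply neg_one_prod
  intro p hp
  rw [List.mem_range'_1] at hp
  unfold cs
  rw [dif_pos (by omega : p < n)]
  simp

omit horth in
theorem sign_sum_zero (hn : Even n) (j : Fin n) :
    ((-1 : k) ^ (j : ℕ) + (-1) ^ (n - j.val - 1)) = 0 := by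
  have hjm : j.val + (n - j.val - 1) = n - 1 := by omega
  have hodd : Odd (n - 1) := Nat.Even.sub_odd (by omega) hn odd_one
  have hprod : (-1 : k) ^ (j : ℕ) * (-1) ^ (n - j.val - 1) = -1 := by
    rw [← pow_add, hjm, Odd.neg_one_pow hodd]
  have hsq : (-1 : k) ^ (j : ℕ) * (-1) ^ (j : ℕ) = 1 := by
    rw [← pow_add]
    exact Even.neg_one_pow ⟨j, rfl⟩
  calc (-1 : k) ^ (j : ℕ) + (-1) ^ (n - j.val - 1)
      = (-1 : k) ^ (j : ℕ) + ((-1) ^ (j : ℕ) * (-1) ^ (j : ℕ)) * (-1) ^ (n - j.val - 1) := by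
        rw [hsq, one_mul]
    _ = (-1 : k) ^ (j : ℕ) + (-1) ^ (j : ℕ) *
        ((-1) ^ (j : ℕ) * (-1) ^ (n - j.val - 1)) := by ring
    _ = 0 := by rw [hprod]; ring

include horth in
theorem iota_basis_top_anticomm (hn : Even n) (j : Fin n) :
    ι Q (b j) * E Q b (fun _ => true) + E Q b (fun _ => true) * ι Q (b j) = 0 := by
  rw [L1 Q b horth j _, L1' Q b horth j _]
  rw [wseg_top_pow (k := k) 0 j.val (by omega), wseg_top_pow (k := k) (j.val + 1)
    (n - j.val - 1) (by omega)]
  rw [← add_smul]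
  rw [show ((-1 : k) ^ (j : ℕ) * (if (fun _ : Fin n => true) j then Q (b j) else 1) +
      (-1) ^ (n - j.val - 1) * (if (fun _ : Fin n => true) j then Q (b j) else 1)) =
      ((-1 : k) ^ (j : ℕ) + (-1) ^ (n - j.val - 1)) *
        (if (fun _ : Fin n => true) j then Q (b j) else 1) from by ring]
  rw [sign_sum_zero (k := k) hn j, zero_mul, zero_smul]

include horth in
theorem iota_top_anticomm (hn : Even n) (m : V) :
    ι Q m * E Q b (fun _ => true) + E Q b (fun _ => true) * ι Q m = 0 := by
  have hm : ι Q m = ∑ j, b.repr m j • ι Q (b j) := by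
    calc ι Q m = ι Q (∑ j, b.repr m j • b j) := by rw [b.sum_repr]
      _ = ∑ j, b.repr m j • ι Q (b j) := by
          rw [map_sum]
          exact Finset.sum_congr rfl fun j _ => map_smul _ _ _
  rw [hm, Finset.sum_mul, Finset.mul_sum, ← Finset.sum_add_distrib]
  refine Finset.sum_eq_zero fun j _ => ?_
  rw [smul_mul_assoc, mul_smul_comm, ← smul_add, iota_basis_top_anticomm Q b horth hn j,
    smul_zero]

include horth in
theorem delta_comm (hn : Even n) (x : CliffordAlgebra Q) (hx : x ∈ CliffordAlgebra.evenOdd Q 0) :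
    E Q b (fun _ => true) * x = x * E Q b (fun _ => true) := by
  induction x, hx using CliffordAlgebra.even_induction with
  | algebraMap r => exact (Algebra.commutes r _).symm
  | add x y hx hy ihx ihy => rw [mul_add, add_mul, ihx, ihy]
  | ι_mul_ι_mul m₁ m₂ x hx ihx =>
    have h1 : E Q b (fun _ => true) * ι Q m₁ = -(ι Q m₁ * E Q b (fun _ => true)) :=
      eq_neg_of_add_eq_zero_left (by
        rw [add_comm]; exact iota_top_anticomm Q b horth hn m₁)
    have h2 : E Q b (fun _ => true) * ι Q m₂ = -(ι Q m₂ * E Q b (fun _ => true)) :=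
      eq_neg_of_add_eq_zero_left (by
        rw [add_comm]; exact iota_top_anticomm Q b horth hn m₂)
    calc E Q b (fun _ => true) * (ι Q m₁ * ι Q m₂ * x)
        = (E Q b (fun _ => true) * ι Q m₁) * ι Q m₂ * x := by rw [← mul_assoc, ← mul_assoc]
      _ = -(ι Q m₁ * (E Q b (fun _ => true) * ι Q m₂)) * x := by
          rw [h1]; simp only [neg_mul, mul_neg, neg_neg, mul_assoc]
      _ = (ι Q m₁ * (ι Q m₂ * E Q b (fun _ => true))) * x := by
          rw [h2]; simp only [neg_mul, mul_neg, neg_neg, mul_assoc]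
      _ = ι Q m₁ * ι Q m₂ * (E Q b (fun _ => true) * x) := by
          rw [mul_assoc, mul_assoc, mul_assoc]
      _ = ι Q m₁ * ι Q m₂ * x * E Q b (fun _ => true) := by
          rw [ihx, ← mul_assoc]

end delta
end EvenCliffordCenter

open EvenCliffordCenter in
/-- The center of the even Clifford algebra of an `n`-dimensional quadratic space with
orthogonal basis `v₁, …, v_n` (all `Q(v_i) ≠ 0`) over a field of characteristic `≠ 2`:
it is `k·1 + k·δ` with `δ = ι(v₁)⋯ι(v_n)` if `n` is even, and `k·1` if `n` is odd. -/
theorem even_clifford_center {k V : Type*} [Field k] [AddCommGroup V] [Module k V]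
    (hchar : (2 : k) ≠ 0)
    (Q : QuadraticForm k V)
    (n : ℕ) (b : Module.Basis (Fin n) k V)
    (horth : ∀ i j, i ≠ j → QuadraticMap.polar Q (b i) (b j) = 0)
    (hQ : ∀ i, Q (b i) ≠ 0) :
    (Even n → ∀ x ∈ CliffordAlgebra.even Q,
      ((∀ y ∈ CliffordAlgebra.even Q, x * y = y * x) ↔
        ∃ a c : k, x = algebraMap k (CliffordAlgebra Q) a +
          c • (List.ofFn fun i => CliffordAlgebra.ι Q (b i)).prod)) ∧
    (Odd n → ∀ x ∈ CliffordAlgebra.even Q,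
      ((∀ y ∈ CliffordAlgebra.even Q, x * y = y * x) ↔
        ∃ a : k, x = algebraMap k (CliffordAlgebra Q) a)) := by
  classical
  have key : ∀ x ∈ CliffordAlgebra.even Q, (∀ y ∈ CliffordAlgebra.even Q, x * y = y * x) →
      ∃ c : (Fin n → Bool) → k, (∀ s, c s ≠ 0 → W (k := k) s = 1) ∧
        (∀ s, c s ≠ 0 → s = (fun _ => false) ∨ s = (fun _ => true)) ∧
        x = ∑ s : Fin n → Bool, c s • E Q b s := by
    intro x hx hcen
    obtain ⟨c, hsupp, rfl⟩ := span_even Q b horth x hx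
    refine ⟨c, hsupp, fun s hcs => ?_, rfl⟩
    by_contra hcon
    push_neg at hcon
    obtain ⟨h1, h2⟩ := hcon
    have hi : ∃ i, s i = true := by
      by_contra h
      push_neg at h
      exact h1 (funext fun i => by have := h i; revert this; cases s i <;> simp)
    have hj : ∃ j, s j = false := by
      by_contra h
      push_neg at h
      exact h2 (funext fun i => by have := h i; revert this; cases s i <;> simp)
    obtain ⟨i, hi'⟩ := hi
    obtain ⟨j, hj'⟩ := hj
    have hij : i ≠ j := fun he => by rw [he, hj'] at hi'; exact Bool.false_ne_true hi'
    rcases lt_or_gt_of_ne hij with h | h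
    · exact hcs (central_coef Q b horth hQ hchar c hcen i j h s (hsupp s hcs)
        (by rw [hi', hj']; simp))
    · exact hcs (central_coef Q b horth hQ hchar c hcen j i h s (hsupp s hcs)
        (by rw [hi', hj']; simp))
  constructor
  · intro hn x hx
    constructor
    · intro hcen
      obtain ⟨c, _, hconst, rfl⟩ := key x hx hcen
      by_cases h0 : (fun _ : Fin n => false) = (fun _ : Fin n => true)
      · have hall : ∀ s : Fin n → Bool, s = (fun _ => false) := fun s =>
          funext fun i => absurd (congrFun h0 i) Bool.false_ne_true
        have : ∑ s : Fin n → Bool, c s • E Q b s = c (fun _ => false) • E Q b (fun _ => false) :=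
          Finset.sum_eq_single_of_mem _ (Finset.mem_univ _)
            (fun s _ hs => absurd (hall s) hs)
        rw [this, E_bot]
        exact ⟨c (fun _ => false), 0, by
          rw [zero_smul, add_zero, Algebra.algebraMap_eq_smul_one]⟩
      · have hsub : ∑ s : Fin n → Bool, c s • E Q b s =
            ∑ s ∈ ({(fun _ => false), (fun _ => true)} : Finset (Fin n → Bool)),
              c s • E Q b s := by
          refine (Finset.sum_subset (Finset.subset_univ _) fun s _ hs => ?_).symm
          by_cases hcs : c s = 0
          · rw [hcs, zero_smul]
          · exact absurd (by
              rcases hconst s hcs with h | h <;> simp [h]) hs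
        rw [hsub, Finset.sum_pair h0, E_bot, E_top]
        exact ⟨c (fun _ => false), c (fun _ => true), by
          rw [Algebra.algebraMap_eq_smul_one]⟩
    · rintro ⟨a, cc, rfl⟩ y hy
      have hδcomm : (List.ofFn fun i => CliffordAlgebra.ι Q (b i)).prod * y =
          y * (List.ofFn fun i => CliffordAlgebra.ι Q (b i)).prod := by
        rw [← E_top Q b]
        exact delta_comm Q b horth hn y hy
      rw [add_mul, mul_add, smul_mul_assoc, mul_smul_comm, hδcomm, Algebra.commutes]
  · intro hn x hx
    constructor
    · intro hcen
      obtain ⟨c, hW, hconst, rfl⟩ := key x hx hcen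
      have hbot : ∀ s, c s ≠ 0 → s = (fun _ => false) := by
        intro s hcs
        rcases hconst s hcs with h | h
        · exact h
        · exfalso
          have h1 := hW s hcs
          rw [h, W_top, Odd.neg_one_pow hn] at h1
          exact hchar (by linear_combination -h1)
      have : ∑ s : Fin n → Bool, c s • E Q b s =
          c (fun _ => false) • E Q b (fun _ => false) :=
        Finset.sum_eq_single_of_mem _ (Finset.mem_univ _) (fun s _ hs => by
          by_cases hcs : c s = 0
          · rw [hcs, zero_smul]
          · exact absurd (hbot s hcs) hs)
      rw [this, E_bot]
      exact ⟨c (fun _ => false), by rw [Algebra.algebraMap_eq_smul_one]⟩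
    · rintro ⟨a, rfl⟩ y hy
      exact Algebra.commutes a y
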